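/- In the group G_II, the elements g3 g4 g3 and g2 do not commute; that is, the commutator [g3 g4 g3, g2^{-1}] is a nontrivial element of G_II. (This is the group-theoretic content of Theorem 4.3: since [g3 g4 g3, g2^{-1}] is a defining generator of Liedtke's subgroup C^Aff for the Type II surface -- the images of g3 g4 g3^{-1} and g2 in S_5 being the disjoint transpositions (2 4) and (1 3) -- the subgroup C^Aff is non-trivial, giving a counter-example to Liedtke's question for generic projections of degree 5.) -/

import Mathlib

namespace Stmt14

open scoped commutatorElement

/-- Generators: `i ↦ g(i+1)` for `i = 0,…,4`. -/
def g (i : Fin 5) : FreeGroup (Fin 5) := FreeGroup.of i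

/-- The braid relator `x y x (y x y)⁻¹`, i.e. `<x,y> = e`. -/
def braid (x y : FreeGroup (Fin 5)) : FreeGroup (Fin 5) := x * y * x * (y * x * y)⁻¹

/-- The commutator relator `x y x⁻¹ y⁻¹`, i.e. `[x,y] = e`. -/
def comm (x y : FreeGroup (Fin 5)) : FreeGroup (Fin 5) := x * y * x⁻¹ * y⁻¹

/-- Relators of the group `G_II` from Theorem 3.5 (union of the Cayley cubic degeneration
and two planes, Type II). -/
def rels : Set (FreeGroup (Fin 5)) :=
  { (g 0) ^ 2, (g 1) ^ 2, (g 2) ^ 2, (g 3) ^ 2, (g 4) ^ 2,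
    comm (g 0) (g 2), comm (g 0) (g 4), comm (g 1) (g 4),
    comm (g 0) (g 1 * g 3 * g 1), comm (g 3) (g 4),
    braid (g 0) (g 1), braid (g 1) (g 2), braid (g 1) (g 3),
    braid (g 2) (g 3), braid (g 2) (g 4) }

/-- The presented group `G_II`. -/
abbrev GII := PresentedGroup rels

/-- A reflection representation: `M i` is the reflection in the simple root `e i` with
respect to a (generalized) Cartan matrix adapted to the relations of `G_II`. -/
def M : Fin 5 → Matrix (Fin 5) (Fin 5) ℤ
  | 0 => !![-1, 1, 0, -1, 0; 0, 1, 0, 0, 0; 0, 0, 1, 0, 0; 0, 0, 0, 1, 0; 0, 0, 0, 0, 1]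
  | 1 => !![1, 0, 0, 0, 0; 1, -1, 1, 1, 0; 0, 0, 1, 0, 0; 0, 0, 0, 1, 0; 0, 0, 0, 0, 1]
  | 2 => !![1, 0, 0, 0, 0; 0, 1, 0, 0, 0; 0, 1, -1, 1, 1; 0, 0, 0, 1, 0; 0, 0, 0, 0, 1]
  | 3 => !![1, 0, 0, 0, 0; 0, 1, 0, 0, 0; 0, 0, 1, 0, 0; -1, 1, 1, -1, 0; 0, 0, 0, 0, 1]
  | 4 => !![1, 0, 0, 0, 0; 0, 1, 0, 0, 0; 0, 0, 1, 0, 0; 0, 0, 0, 1, 0; 0, 0, 1, 0, -1]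

lemma Msq : ∀ i, M i * M i = 1 := by decide

/-- The generators as units of the matrix ring. -/
def u (i : Fin 5) : (Matrix (Fin 5) (Fin 5) ℤ)ˣ := ⟨M i, M i, Msq i, Msq i⟩

/-- The lift of `u` to the free group. -/
def f : FreeGroup (Fin 5) →* (Matrix (Fin 5) (Fin 5) ℤ)ˣ := FreeGroup.lift u

lemma f_g (i : Fin 5) : f (g i) = u i := FreeGroup.lift_apply_of

lemma f_rels : ∀ r ∈ rels, f r = 1 := by
  intro r hr
  simp only [rels, Set.mem_insert_iff, Set.mem_singleton_iff] at hr
  rcases hr with rfl|rfl|rfl|rfl|rfl|rfl|rfl|rfl|rfl|rfl|rfl|rfl|rfl|rfl|rfl <;>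
    simp only [comm, braid, map_mul, map_pow, map_inv, f_g] <;>
    refine Units.ext ?_ <;> decide

/-- The induced homomorphism from `G_II`. -/
def φ : GII →* (Matrix (Fin 5) (Fin 5) ℤ)ˣ := PresentedGroup.toGroup f_rels

lemma φ_of (i : Fin 5) : φ (PresentedGroup.of i) = u i := PresentedGroup.toGroup.of f_rels

/-- Theorem 4.3 (group-theoretic content): in `G_II`, the elements `g3 g4 g3` and `g2` do
not commute, i.e. the commutator `[g3 g4 g3, g2⁻¹]` is a nontrivial element of `G_II`.
Hence Liedtke's subgroup `C^Aff` is non-trivial for the Type II degree-5 surface. -/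
theorem commutator_ne_one :
    ⁅(PresentedGroup.of 2 * PresentedGroup.of 3 * PresentedGroup.of 2 : GII),
      (PresentedGroup.of 1 : GII)⁻¹⁆ ≠ 1 := by
  intro h
  have h2 : φ ⁅(PresentedGroup.of 2 * PresentedGroup.of 3 * PresentedGroup.of 2 : GII),
      (PresentedGroup.of 1 : GII)⁻¹⁆ = 1 := by rw [h, map_one]
  rw [map_commutatorElement, map_mul, map_mul, map_inv, φ_of, φ_of, φ_of] at h2
  have h3 := congrArg Units.val h2
  revert h3
  decide

end Stmt14
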